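/- If G has minimum degree at least k ≥ 2, then G contains a cycle C containing at least k+1 vertices each having at least k neighbors in C. -/

import Mathlib

open Finset List

section Helpers

variable {V : Type*} [Fintype V] [DecidableEq V]

private lemma getElem_congr' (l : List V) {i j : ℕ} (h : i = j) {hi : i < l.length}
    {hj : j < l.length} : (l[i]'hi) = (l[j]'hj) := by subst h; rfl

private lemma exists_walk_of_chain (G : SimpleGraph V) :
    ∀ (l : List V) (hne : l ≠ []), l.Chain' G.Adj →
      ∃ w : G.Walk (l.head hne) (l.getLast hne), w.support = l := by
  intro l
  induction l with
  | nil => intro h; exact absurd rfl h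
  | cons a t ih =>
    intro hne hc
    match t, ih with
    | [], _ => exact ⟨SimpleGraph.Walk.nil, rfl⟩
    | b :: t', ih =>
      have hadj : G.Adj a b := (List.isChain_cons_cons.mp hc).1
      obtain ⟨w, hw⟩ := ih (by simp) (List.isChain_cons_cons.mp hc).2
      rw [List.getLast_cons (by simp : (b :: t') ≠ [])]
      exact ⟨SimpleGraph.Walk.cons hadj w, congrArg (List.cons a) hw⟩

private lemma second_of_edge (G : SimpleGraph V) {a b x : V} (w : G.Walk a b)
    (hw : w.IsPath) (hx : s(a, x) ∈ w.edges) :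
    ∃ h : 1 < w.support.length, w.support[1] = x := by
  cases w with
  | nil => simp at hx
  | @cons _ c _ h' w' =>
    rw [SimpleGraph.Walk.edges_cons, List.mem_cons] at hx
    have hs : (SimpleGraph.Walk.cons h' w').support = a :: c :: w'.support.tail := by
      rw [SimpleGraph.Walk.support_cons]
      congr 1
      exact w'.support_eq_cons
    rcases hx with heq | hmem
    · have hxc : x = c := Sym2.congr_right.mp heq
      subst hxc
      refine ⟨by rw [hs]; simp, ?_⟩
      simp [hs]
    · exact absurd (SimpleGraph.Walk.fst_mem_support_of_mem_edges w' hmem)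
        ((SimpleGraph.Walk.cons_isPath_iff h' w').mp hw).2

private def rotL (l : List V) (j : ℕ) : List V := (l.take j).reverse ++ l.drop j

private lemma rotL_perm (l : List V) (j : ℕ) : (rotL l j).Perm l := by
  have h1 : ((l.take j).reverse ++ l.drop j).Perm ((l.take j) ++ l.drop j) :=
    ((l.take j).reverse_perm).append_right _
  simpa [rotL, List.take_append_drop] using h1

private lemma rotL_length (l : List V) (j : ℕ) : (rotL l j).length = l.length :=
  (rotL_perm l j).length_eq

private lemma rotL_getElem_ge {l : List V} {j p : ℕ} (hjp : j ≤ p) (hp : p < l.length)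
    {hp' : p < (rotL l j).length} : ((rotL l j)[p]'hp') = (l[p]'hp) := by
  unfold rotL at *
  have hjl : j ≤ l.length := le_of_lt (lt_of_le_of_lt hjp hp)
  have hlen : ((l.take j).reverse).length = j := by simp [hjl]
  rw [List.getElem_append_right (by omega : ((l.take j).reverse).length ≤ p)]
  rw [List.getElem_drop]
  exact getElem_congr' l (by omega)

private lemma rotL_getElem_zero {l : List V} {j : ℕ} (h1 : 1 ≤ j) (hj : j ≤ l.length)
    {h0 : 0 < (rotL l j).length} {hj1 : j - 1 < l.length} :
    ((rotL l j)[0]'h0) = (l[j-1]'hj1) := by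
  unfold rotL at *
  have hlen : ((l.take j).reverse).length = j := by simp [hj]
  rw [List.getElem_append_left (by omega : 0 < ((l.take j).reverse).length)]
  rw [List.getElem_reverse]
  rw [List.getElem_take]
  exact getElem_congr' l (by rw [List.length_take]; omega)

private lemma rotL_chain' (G : SimpleGraph V) {l : List V} {j : ℕ} (hc : l.Chain' G.Adj)
    (h1 : 1 ≤ j) (hj : j < l.length) {h0 : 0 < l.length}
    (hadj : G.Adj ((l[0]'h0)) ((l[j]'hj))) : (rotL l j).Chain' G.Adj := by
  unfold rotL
  simp only [List.Chain']
  rw [List.isChain_append]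
  refine ⟨?_, hc.drop j, ?_⟩
  · rw [List.isChain_reverse]
    exact List.IsChain.imp (fun a b hab => hab.symm) (hc.take j)
  · intro x hx y hy
    rw [List.getLast?_reverse, List.head?_take] at hx
    simp only [if_neg (by omega : ¬ j = 0)] at hx
    rw [List.head?_eq_head (by rw [← List.length_pos_iff]; omega : l ≠ [])] at hx
    rw [List.head?_drop] at hy
    rw [List.getElem?_eq_getElem hj] at hy
    simp only [Option.mem_def, Option.some_inj] at hx hy
    subst hx; subst hy
    have : l.head (by rw [← List.length_pos_iff]; omega) = (l[0]'h0) := (List.getElem_zero h0).symm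
    rw [this]
    exact hadj

private lemma rotL_take_toFinset (l : List V) {j m : ℕ} (h1 : j ≤ m) (hj : j ≤ l.length) :
    ((rotL l j).take m).toFinset = (l.take m).toFinset := by
  unfold rotL
  rw [List.take_append]
  have hlen : ((l.take j).reverse).length = j := by simp [hj]
  rw [List.take_of_length_le (by omega : ((l.take j).reverse).length ≤ m)]
  have hm : m = j + (m - j) := by omega
  conv_rhs => rw [hm, List.take_add]
  simp [List.toFinset_append, hlen]

end Helpers

/-- If `G` has minimum degree at least `k ≥ 2`, then `G` contains a cycle `C` containing
at least `k+1` vertices each having at least `k` neighbors in `C`. -/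
theorem exists_cycle_many_high_degree_vertices {V : Type*} [Fintype V] [DecidableEq V] [Nonempty V]
    (G : SimpleGraph V) [DecidableRel G.Adj]
    (k : ℕ) (hk : 2 ≤ k) (hdeg : ∀ v : V, k ≤ G.degree v) :
    ∃ (v : V) (C : G.Walk v v), C.IsCycle ∧
      k + 1 ≤ (C.support.toFinset.filter
        (fun u => k ≤ (C.support.toFinset.filter (fun x => G.Adj u x)).card)).card := by
  classical
  have hbound : ∀ l : List V, l.Nodup → l.length ≤ Fintype.card V :=
    fun l h => h.length_le_card
  obtain ⟨v₀⟩ := ‹Nonempty V›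
  obtain ⟨w₀, hw₀⟩ : ∃ w, G.Adj v₀ w := by
    have h1 : 0 < G.degree v₀ := lt_of_lt_of_le (by omega) (hdeg v₀)
    rw [← SimpleGraph.card_neighborFinset_eq_degree] at h1
    obtain ⟨w, hw⟩ := Finset.card_pos.mp h1
    exact ⟨w, (SimpleGraph.mem_neighborFinset _ _ _).mp hw⟩
  have hpairc : ([v₀, w₀] : List V).Chain' G.Adj := by simp [List.Chain', hw₀]
  have hpairn : ([v₀, w₀] : List V).Nodup := by simp [hw₀.ne]
  set PP : ℕ → Prop := fun d => ∃ l : List V, (l.Chain' G.Adj ∧ l.Nodup) ∧ l.length = d with hPP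
  have hPP2 : PP 2 := ⟨[v₀, w₀], ⟨hpairc, hpairn⟩, rfl⟩
  have h2n : 2 ≤ Fintype.card V := hbound _ hpairn
  set ml := Nat.findGreatest PP (Fintype.card V) with hmldef
  have hml_ex : PP ml := Nat.findGreatest_spec h2n hPP2
  have hml2 : 2 ≤ ml := Nat.le_findGreatest h2n hPP2
  have hml_max : ∀ l : List V, l.Chain' G.Adj → l.Nodup → l.length ≤ ml :=
    fun l hc hnd => Nat.le_findGreatest (hbound l hnd) ⟨l, ⟨hc, hnd⟩, rfl⟩
  have hml_n : ml ≤ Fintype.card V := Nat.findGreatest_le _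
  -- neighbors of the head of a longest path lie on the path
  have hclosed : ∀ l : List V, l.Chain' G.Adj → l.Nodup → l.length = ml →
      ∀ x (h0 : 0 < l.length), G.Adj ((l[0]'h0)) x → x ∈ l := by
    intro l hc hnd hlen x h0 hadj
    by_contra hx
    have hch : (x :: l).Chain' G.Adj := by
      simp only [List.Chain']
      rw [List.isChain_cons]
      refine ⟨?_, hc⟩
      intro y hy
      rw [List.head?_eq_head (by rw [← List.length_pos_iff]; omega : l ≠ [])] at hy
      simp only [Option.mem_def, Option.some_inj] at hy
      subst hy
      have : l.head (by rw [← List.length_pos_iff]; omega) = (l[0]'h0) := (List.getElem_zero h0).symm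
      rw [this]
      exact hadj.symm
    have hnd2 : (x :: l).Nodup := List.nodup_cons.mpr ⟨hx, hnd⟩
    have := hml_max _ hch hnd2
    simp only [List.length_cons] at this
    omega
  set QQ : ℕ → Prop := fun t => ∃ l : List V, ((l.Chain' G.Adj ∧ l.Nodup) ∧ l.length = ml) ∧
      ∃ h0 : 0 < l.length, ∃ h : t < l.length, G.Adj ((l[0]'h0)) ((l[t]'h)) with hQQ
  have hQQ1 : QQ 1 := by
    obtain ⟨l, hl, hlen⟩ := hml_ex
    refine ⟨l, ⟨hl, hlen⟩, ⟨by omega, by omega, ?_⟩⟩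
    have := List.isChain_iff_getElem.mp hl.1 0 (by omega)
    simpa using this
  set T := Nat.findGreatest QQ (Fintype.card V) with hTdef
  have hQT : QQ T := Nat.findGreatest_spec (by omega) hQQ1
  have hT1 : 1 ≤ T := Nat.le_findGreatest (by omega) hQQ1
  have hTmax : ∀ l : List V, l.Chain' G.Adj → l.Nodup → l.length = ml →
      ∀ j (hj : j < l.length) (h0 : 0 < l.length), G.Adj ((l[0]'h0)) ((l[j]'hj)) → j ≤ T := by
    intro l hc hnd hlen j hj h0 hadj
    exact Nat.le_findGreatest (by omega) ⟨l, ⟨⟨hc, hnd⟩, hlen⟩, h0, hj, hadj⟩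
  obtain ⟨P, ⟨⟨hPc, hPnd⟩, hPlen⟩, hP0x, hTP, hadjT⟩ := hQT
  have hP0 : 0 < P.length := by omega
  have hTml : T < ml := by omega
  set cyl : List V := P.take (T+1) with hcdef
  set CC : Finset V := cyl.toFinset with hCC
  have hclen : cyl.length = T + 1 := by
    rw [hcdef, List.length_take]
    omega
  set GoodF : Finset V := CC.filter (fun u => k ≤ (CC.filter (fun x => G.Adj u x)).card)
    with hGoodF
  set Fam : List V → Prop := fun W => W.Chain' G.Adj ∧ W.Nodup ∧ W.length = ml ∧
      (W.take (T+1)).toFinset = CC with hFamdef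
  have hFamP : Fam P := ⟨hPc, hPnd, hPlen, by rw [hCC, hcdef]⟩
  -- (A) any neighbor position of the head is in [1, T] and the vertex is in CC
  have hA : ∀ W, Fam W → ∀ j (hj : j < W.length) (h0 : 0 < W.length),
      G.Adj ((W[0]'h0)) ((W[j]'hj)) → 1 ≤ j ∧ j ≤ T ∧ (W[j]'hj) ∈ CC := by
    intro W hW j hj h0 hadj
    obtain ⟨hWc, hWnd, hWlen, hWtake⟩ := hW
    have hj1 : 1 ≤ j := by
      rcases Nat.eq_zero_or_pos j with h | h
      · subst h; exact absurd hadj (G.irrefl)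
      · exact h
    have hjT : j ≤ T := hTmax W hWc hWnd hWlen j hj h0 hadj
    refine ⟨hj1, hjT, ?_⟩
    rw [← hWtake, List.mem_toFinset]
    have hjlt : j < (W.take (T+1)).length := by
      rw [List.length_take]; omega
    have hW2 : ((W.take (T+1))[j]'hjlt) = (W[j]'hj) := List.getElem_take
    rw [← hW2]
    exact List.getElem_mem hjlt
  -- (B) all neighbors of the head are on the path
  have hB : ∀ W, Fam W → ∀ (h0 : 0 < W.length) x, G.Adj ((W[0]'h0)) x →
      ∃ j, ∃ hj : j < W.length, (W[j]'hj) = x := by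
    intro W hW h0 x hadj
    obtain ⟨hWc, hWnd, hWlen, _⟩ := hW
    exact List.mem_iff_getElem.mp (hclosed W hWc hWnd hWlen x h0 hadj)
  -- (C) the head of any member of the family is good
  have hC : ∀ W, Fam W → ∀ (h0 : 0 < W.length), ((W[0]'h0)) ∈ GoodF := by
    intro W hW h0
    have hWtake := hW.2.2.2
    have hmem0 : ((W[0]'h0)) ∈ CC := by
      rw [← hWtake, List.mem_toFinset]
      have h0t : 0 < (W.take (T+1)).length := by
        rw [List.length_take]
        have := hW.2.2.1
        omega
      have : ((W.take (T+1))[0]'h0t) = (W[0]'h0) := List.getElem_take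
      rw [← this]
      exact List.getElem_mem h0t
    rw [hGoodF, Finset.mem_filter]
    refine ⟨hmem0, ?_⟩
    have hsub : G.neighborFinset ((W[0]'h0)) ⊆ CC.filter (fun x => G.Adj ((W[0]'h0)) x) := by
      intro x hx
      have hadj := (SimpleGraph.mem_neighborFinset _ _ _).mp hx
      obtain ⟨j, hj, hjx⟩ := hB W hW h0 x hadj
      have hmem := (hA W hW j hj h0 (by rw [hjx]; exact hadj)).2.2
      exact Finset.mem_filter.mpr ⟨by rw [← hjx]; exact hmem, hadj⟩
    calc k ≤ G.degree ((W[0]'h0)) := hdeg _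
      _ = (G.neighborFinset ((W[0]'h0))).card :=
          (SimpleGraph.card_neighborFinset_eq_degree _ _).symm
      _ ≤ (CC.filter (fun x => G.Adj ((W[0]'h0)) x)).card := Finset.card_le_card hsub
  -- (D) rotations stay in the family
  have hD : ∀ W, Fam W → ∀ j (hj : j < W.length) (h0 : 0 < W.length),
      G.Adj ((W[0]'h0)) ((W[j]'hj)) → Fam (rotL W j) ∧
        ∃ h0r : 0 < (rotL W j).length, ∃ hj1 : j - 1 < W.length,
          ((rotL W j)[0]'h0r) = (W[j-1]'hj1) := by
    intro W hW j hj h0 hadj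
    obtain ⟨hj1, hjT, _⟩ := hA W hW j hj h0 hadj
    obtain ⟨hWc, hWnd, hWlen, hWtake⟩ := hW
    refine ⟨⟨rotL_chain' G hWc hj1 hj hadj,
      ((rotL_perm W j).nodup_iff).mpr hWnd,
      by rw [rotL_length]; exact hWlen, ?_⟩, ?_⟩
    · rw [rotL_take_toFinset W (by omega : j ≤ T+1) (le_of_lt hj)]
      exact hWtake
    · exact ⟨by rw [rotL_length]; omega, by omega,
        rotL_getElem_zero hj1 (le_of_lt hj)⟩
  -- the neighbor-position set of the head
  set J : List V → Finset ℕ := fun W => (Finset.range ml).filter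
      (fun j => ∃ h0 : 0 < W.length, ∃ hj : j < W.length, G.Adj ((W[0]'h0)) ((W[j]'hj))) with hJdef
  set pred : List V → ℕ → V := fun W j => W.getD (j-1) v₀ with hpreddef
  have hJcard : ∀ W, Fam W → k ≤ (J W).card := by
    intro W hW
    have h0 : 0 < W.length := by
      have := hW.2.2.1; omega
    have hsub : G.neighborFinset ((W[0]'h0)) ⊆ (J W).image (fun j => W.getD j v₀) := by
      intro x hx
      have hadj := (SimpleGraph.mem_neighborFinset _ _ _).mp hx
      obtain ⟨j, hj, hjx⟩ := hB W hW h0 x hadj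
      refine Finset.mem_image.mpr ⟨j, ?_, ?_⟩
      · refine Finset.mem_filter.mpr ⟨Finset.mem_range.mpr ?_, h0, hj, ?_⟩
        · have := hW.2.2.1; omega
        · rw [hjx]; exact hadj
      · rw [List.getD_eq_getElem _ _ hj, hjx]
    calc k ≤ G.degree ((W[0]'h0)) := hdeg _
      _ = (G.neighborFinset ((W[0]'h0))).card :=
          (SimpleGraph.card_neighborFinset_eq_degree _ _).symm
      _ ≤ ((J W).image (fun j => W.getD j v₀)).card := Finset.card_le_card hsub
      _ ≤ (J W).card := Finset.card_image_le
  have hpred_good : ∀ W, Fam W → ∀ j ∈ J W, pred W j ∈ GoodF := by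
    intro W hW j hjJ
    obtain ⟨-, h0, hj, hadj⟩ := Finset.mem_filter.mp hjJ
    obtain ⟨hfam', h0r, hj1lt, hhead⟩ := hD W hW j hj h0 hadj
    have hgood := hC (rotL W j) hfam' h0r
    rw [hhead] at hgood
    rw [hpreddef]
    simp only
    rw [List.getD_eq_getElem _ _ hj1lt]
    exact hgood
  have hpred_inj : ∀ W, Fam W → Set.InjOn (pred W) (J W) := by
    intro W hW j hjJ q hqJ heq
    obtain ⟨-, h0, hj, hadjj⟩ := Finset.mem_filter.mp hjJ
    obtain ⟨-, h0q, hq, hadjq⟩ := Finset.mem_filter.mp hqJ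
    have hj1 := (hA W hW j hj h0 hadjj).1
    have hq1 := (hA W hW q hq h0 hadjq).1
    rw [hpreddef] at heq
    simp only at heq
    rw [List.getD_eq_getElem _ _ (by omega : j - 1 < W.length),
      List.getD_eq_getElem _ _ (by omega : q - 1 < W.length)] at heq
    have := (hW.2.1.getElem_inj_iff).mp heq
    omega
  have hstep1 : GoodF.card ≤ k → ∀ W, Fam W → GoodF = (J W).image (pred W) := by
    intro hle W hW
    have himg : (J W).image (pred W) ⊆ GoodF := by
      intro u hu
      obtain ⟨j, hjJ, rfl⟩ := Finset.mem_image.mp hu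
      exact hpred_good W hW j hjJ
    have hcard2 : ((J W).image (pred W)).card = (J W).card :=
      Finset.card_image_of_injOn (hpred_inj W hW)
    have hge : k ≤ ((J W).image (pred W)).card := by rw [hcard2]; exact hJcard W hW
    exact (Finset.eq_of_subset_of_card_le himg (le_trans hle hge)).symm
  have hTJP : T ∈ J P := by
    refine Finset.mem_filter.mpr ⟨Finset.mem_range.mpr hTml, hP0, hTP, hadjT⟩
  -- the main counting argument
  have hcard : k + 1 ≤ GoodF.card := by
    by_contra hcon
    have hle : GoodF.card ≤ k := by omega
    have hPT1 : pred P T ∈ GoodF := hpred_good P hFamP T hTJP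
    have hT1l : T - 1 < P.length := by omega
    have hPT1' : pred P T = (P[T-1]'hT1l) := by
      rw [hpreddef]; simp only
      rw [List.getD_eq_getElem _ _ hT1l]
    -- step 2 : every good vertex is adjacent to P[T]
    have hstep2 : ∀ u ∈ GoodF, G.Adj u ((P[T]'hTP)) := by
      intro u hu
      rw [hstep1 hle P hFamP] at hu
      obtain ⟨j, hjJ, hju⟩ := Finset.mem_image.mp hu
      obtain ⟨-, h0, hj, hadjj⟩ := Finset.mem_filter.mp hjJ
      obtain ⟨hj1, hjT, -⟩ := hA P hFamP j hj h0 hadjj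
      have hjm1 : j - 1 < P.length := by omega
      have hju' : (P[j-1]'hjm1) = u := by
        rw [← hju, hpreddef]; simp only
        rw [List.getD_eq_getElem _ _ hjm1]
      rcases eq_or_lt_of_le hjT with hjT' | hjT'
      · -- j = T
        have hcj := List.isChain_iff_getElem.mp hPc (j-1) (by omega)
        have hjj : (j-1)+1 < P.length := by omega
        have e1 : (P[(j-1)+1]'hjj) = (P[T]'hTP) := getElem_congr' P (by omega)
        rw [e1] at hcj
        rw [← hju']
        exact hcj
      · -- j < T
        obtain ⟨hfamr, h0r, hj1lt, hheadr⟩ := hD P hFamP j hj h0 hadjj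
        have hmemr : pred P T ∈ (J (rotL P j)).image (pred (rotL P j)) := by
          rw [← hstep1 hle (rotL P j) hfamr]
          exact hPT1
        obtain ⟨q, hqJ, hq⟩ := Finset.mem_image.mp hmemr
        obtain ⟨-, h0q, hq_lt, hadjq⟩ := Finset.mem_filter.mp hqJ
        obtain ⟨hq1, hqT, -⟩ := hA (rotL P j) hfamr q hq_lt h0q hadjq
        have hT1lt : T - 1 < P.length := by omega
        have hT1r : T - 1 < (rotL P j).length := by rw [rotL_length]; omega
        have hWrT1 : ((rotL P j)[T-1]'hT1r) = (P[T-1]'hT1lt) :=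
          rotL_getElem_ge (by omega : j ≤ T - 1) hT1lt
        have hq1r : q - 1 < (rotL P j).length := by omega
        have hqval : ((rotL P j)[q-1]'hq1r) = ((rotL P j)[T-1]'hT1r) := by
          rw [hpreddef] at hq
          simp only at hq
          rw [List.getD_eq_getElem _ _ hq1r] at hq
          rw [hWrT1, ← hPT1']
          exact hq
        have hqeq : q - 1 = T - 1 := (hfamr.2.1.getElem_inj_iff).mp hqval
        have hqT2 : q = T := by omega
        -- hadjq : Adj (rotL P j)[0] (rotL P j)[q]
        have hhd : ((rotL P j)[0]'h0q) = u := by rw [hheadr]; exact hju'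
        have hTr : T < (rotL P j).length := by rw [rotL_length]; omega
        have hqTv : ((rotL P j)[q]'hq_lt) = (P[T]'hTP) := by
          have e2 : ((rotL P j)[q]'hq_lt) = ((rotL P j)[T]'hTr) := getElem_congr' _ hqT2
          rw [e2]
          exact rotL_getElem_ge (by omega : j ≤ T) hTP
        rw [hhd, hqTv] at hadjq
        exact hadjq
    -- step 3 : then P[T] itself is good, contradiction
    have hPTCC : ((P[T]'hTP)) ∈ CC := by
      rw [hCC, hcdef, List.mem_toFinset]
      have hTt : T < (P.take (T+1)).length := by rw [List.length_take]; omega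
      have : ((P.take (T+1))[T]'hTt) = (P[T]'hTP) := List.getElem_take
      rw [← this]
      exact List.getElem_mem hTt
    have hkG : k ≤ GoodF.card := by
      rw [hstep1 hle P hFamP, Finset.card_image_of_injOn (hpred_inj P hFamP)]
      exact hJcard P hFamP
    have hPTgood : ((P[T]'hTP)) ∈ GoodF := by
      rw [hGoodF, Finset.mem_filter]
      refine ⟨hPTCC, ?_⟩
      have hsub2 : GoodF ⊆ CC.filter (fun x => G.Adj ((P[T]'hTP)) x) := by
        intro u hu
        have huCC : u ∈ CC := (Finset.mem_filter.mp (by rw [hGoodF] at hu; exact hu)).1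
        exact Finset.mem_filter.mpr ⟨huCC, (hstep2 u hu).symm⟩
      exact le_trans hkG (Finset.card_le_card hsub2)
    rw [hstep1 hle P hFamP] at hPTgood
    obtain ⟨j, hjJ, hju⟩ := Finset.mem_image.mp hPTgood
    obtain ⟨-, h0, hj, hadjj⟩ := Finset.mem_filter.mp hjJ
    obtain ⟨hj1, hjT, -⟩ := hA P hFamP j hj h0 hadjj
    rw [hpreddef] at hju
    simp only at hju
    rw [List.getD_eq_getElem _ _ (by omega : j - 1 < P.length)] at hju
    have := (hPnd.getElem_inj_iff).mp hju
    omega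
  -- T ≥ k
  have hTk : k ≤ T := by
    have hsub : (J P) ⊆ Finset.Icc 1 T := by
      intro j hjJ
      obtain ⟨-, h0, hj, hadjj⟩ := Finset.mem_filter.mp hjJ
      obtain ⟨hj1, hjT, -⟩ := hA P hFamP j hj h0 hadjj
      exact Finset.mem_Icc.mpr ⟨hj1, hjT⟩
    have h1 := Finset.card_le_card hsub
    rw [Nat.card_Icc] at h1
    have h2 := hJcard P hFamP
    omega
  -- build the cycle on cyl = P.take (T+1)
  have hcne : cyl ≠ [] := by
    intro h
    rw [h] at hclen
    simp at hclen
  have hchc : cyl.Chain' G.Adj := by rw [hcdef]; exact hPc.take _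
  have hcnd : cyl.Nodup := by
    rw [hcdef]
    exact (List.take_sublist _ _).nodup hPnd
  obtain ⟨w, hwsup⟩ := exists_walk_of_chain G cyl hcne hchc
  have hhead : cyl.head hcne = (P[0]'hP0) := by
    have h0c : 0 < cyl.length := by omega
    have e0 : (cyl[0]'h0c) = (P[0]'hP0) := List.getElem_take
    exact ((List.getElem_zero h0c).symm.trans e0)
  have hlast : cyl.getLast hcne = (P[T]'hTP) := by
    rw [List.getLast_eq_getElem]
    have hcl1 : cyl.length - 1 < cyl.length := by omega
    have hcT : T < cyl.length := by omega
    have e3 : (cyl[cyl.length - 1]'hcl1) = (cyl[T]'hcT) := getElem_congr' cyl (by omega)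
    rw [e3]
    exact List.getElem_take
  have hadj0 : G.Adj (cyl.head hcne) (cyl.getLast hcne) := by
    rw [hhead, hlast]; exact hadjT
  have hwpath : w.IsPath := by
    rw [SimpleGraph.Walk.isPath_def, hwsup]; exact hcnd
  refine ⟨cyl.head hcne, SimpleGraph.Walk.cons hadj0 w.reverse, ?_, ?_⟩
  · rw [SimpleGraph.Walk.cons_isCycle_iff]
    refine ⟨(SimpleGraph.Walk.isPath_reverse_iff w).mpr hwpath, ?_⟩
    intro hedge
    rw [SimpleGraph.Walk.edges_reverse, List.mem_reverse] at hedge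
    obtain ⟨hlen2, hsec⟩ := second_of_edge G w hwpath hedge
    simp only [hwsup] at hlen2 hsec
    have hcT2 : T < cyl.length := by omega
    have hlastc : cyl.getLast hcne = (cyl[T]'hcT2) := by
      rw [List.getLast_eq_getElem]
      exact getElem_congr' cyl (by omega)
    have h1T := (hcnd.getElem_inj_iff).mp (hsec.trans hlastc)
    omega
  · have hsupfin : (SimpleGraph.Walk.cons hadj0 w.reverse).support.toFinset = CC := by
      rw [SimpleGraph.Walk.support_cons, SimpleGraph.Walk.support_reverse, hwsup]
      rw [List.toFinset_cons, List.toFinset_reverse]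
      rw [hCC]
      exact Finset.insert_eq_self.mpr (List.mem_toFinset.mpr (List.head_mem hcne))
    rw [hsupfin]
    exact hGoodF ▸ hcard
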